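/- Let R be a Noetherian domain with fraction field Frac(R), let S be a ring with R ⊆ S ⊆ Frac(R) that is finitely generated as an R-module, and set co(R,S) = {r ∈ R : r·S ⊆ R}. Let M be a finitely generated R-module. (i) If the R-module structure of M extends to an S-module structure (compatible with the inclusion R ⊆ S), then tr(M) ⊆ co(R,S). (ii) Conversely, if M is reflexive and tr(M) ⊆ co(R,S), then the R-module structure of M extends to an S-module structure. -/
import Mathlib


set_option synthInstance.maxHeartbeats 400000
set_option maxHeartbeats 1000000

/-- The trace ideal of a module: the ideal generated by all values `f m`
for `f : M →ₗ[R] R` and `m : M`. -/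
def traceIdeal (R : Type*) [CommRing R] (M : Type*) [AddCommGroup M] [Module R M] :
    Ideal R :=
  ⨆ f : M →ₗ[R] R, LinearMap.range f

/-- For a birational extension `R ⊆ S` (realized as a subalgebra `S` of an `R`-algebra `A`),
the conductor `co(R,S) = {r ∈ R : r · S ⊆ R}`, as an ideal of `R`. -/
def conductorTo (R : Type*) [CommRing R] {A : Type*} [CommRing A] [Algebra R A]
    (S : Subalgebra R A) : Ideal R where
  carrier := {r : R | ∀ s ∈ S, algebraMap R A r * s ∈ (algebraMap R A).range}
  add_mem' := by
    intro a b ha hb x hx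
    rw [map_add, add_mul]
    exact add_mem (ha x hx) (hb x hx)
  zero_mem' := by
    intro x hx
    rw [map_zero, zero_mul]
    exact zero_mem _
  smul_mem' := by
    intro c a ha x hx
    rw [smul_eq_mul, map_mul, mul_assoc]
    exact mul_mem ⟨c, rfl⟩ (ha x hx)

/-- The `R`-module structure of `M` extends to an `S`-module structure compatible
with the inclusion `R ⊆ S` (i.e. restricting the `S`-action along `algebraMap R S`
recovers the given `R`-action). -/
def ExtendsToModule (R : Type*) [CommRing R] {A : Type*} [CommRing A] [Algebra R A]
    (S : Subalgebra R A) (M : Type*) [AddCommGroup M] [Module R M] : Prop :=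
  ∃ inst : Module S M, ∀ (r : R) (m : M),
    (letI := inst; (algebraMap R S r) • m) = r • m

section Aux

variable (R : Type*) [CommRing R] [IsDomain R]
  (S : Subalgebra R (FractionRing R))
  (M : Type*) [AddCommGroup M] [Module R M]

/-- direction (i) -/
theorem aux_fwd (h : ExtendsToModule R S M) : traceIdeal R M ≤ conductorTo R S := by
  obtain ⟨inst, hcompat⟩ := h
  letI := inst
  refine iSup_le fun f => ?_
  rintro _ ⟨m, rfl⟩
  intro x hx
  obtain ⟨⟨a, b⟩, hab⟩ := IsLocalization.surj (nonZeroDivisors R) x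
  -- hab : x * algebraMap b = algebraMap a
  have hb0 : (b : R) ≠ 0 := nonZeroDivisors.coe_ne_zero b
  have hinj : Function.Injective (algebraMap R (FractionRing R)) :=
    IsFractionRing.injective R (FractionRing R)
  have hιb0 : algebraMap R (FractionRing R) (b : R) ≠ 0 := fun h0 =>
    hb0 (hinj (by rw [h0, map_zero]))
  set s : S := ⟨x, hx⟩ with hs
  have hmulS : s * algebraMap R S (b : R) = algebraMap R S a := by
    apply Subtype.ext
    push_cast
    simpa using hab
  have hkey : (b : R) * f (s • m) = a * f m := by
    have h1 : (b : R) • (s • m) = a • m := by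
      rw [← hcompat (b : R) (s • m), ← mul_smul, mul_comm, hmulS, hcompat]
    calc (b : R) * f (s • m) = f ((b : R) • (s • m)) := (f.map_smul (b : R) (s • m)).symm
    _ = f (a • m) := by rw [h1]
    _ = a * f m := f.map_smul a m
  have hK : algebraMap R (FractionRing R) (f (s • m)) = x * algebraMap R (FractionRing R) (f m) := by
    apply mul_left_cancel₀ hιb0
    calc algebraMap R (FractionRing R) (b : R) * algebraMap R (FractionRing R) (f (s • m))
        = algebraMap R (FractionRing R) ((b : R) * f (s • m)) := (map_mul _ _ _).symm
    _ = algebraMap R (FractionRing R) (a * f m) := by rw [hkey]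
    _ = algebraMap R (FractionRing R) a * algebraMap R (FractionRing R) (f m) := map_mul _ _ _
    _ = (x * algebraMap R (FractionRing R) (b : R)) * algebraMap R (FractionRing R) (f m) := by
        rw [hab]
    _ = algebraMap R (FractionRing R) (b : R) * (x * algebraMap R (FractionRing R) (f m)) := by
        ring
  exact ⟨f (s • m), by rw [hK, mul_comm]⟩

/-- direction (ii) -/
theorem aux_bwd (hrefl : Module.IsReflexive R M)
    (htr : traceIdeal R M ≤ conductorTo R S) : ExtendsToModule R S M := by
  haveI := hrefl
  have hinj : Function.Injective (algebraMap R (FractionRing R)) :=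
    IsFractionRing.injective R (FractionRing R)
  -- key membership
  have key : ∀ (s : S) (m : M) (f : M →ₗ[R] R),
      (s : FractionRing R) * algebraMap R (FractionRing R) (f m)
        ∈ (algebraMap R (FractionRing R)).range := by
    intro s m f
    have h1 : f m ∈ traceIdeal R M :=
      Submodule.mem_iSup_of_mem f ⟨m, rfl⟩
    have h2 := htr h1 (s : FractionRing R) s.2
    rwa [mul_comm] at h2
  -- the chosen preimage
  let val : S → M → (M →ₗ[R] R) → R := fun s m f => (key s m f).choose
  have hval : ∀ (s : S) (m : M) (f : M →ₗ[R] R),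
      algebraMap R (FractionRing R) (val s m f)
        = (s : FractionRing R) * algebraMap R (FractionRing R) (f m) :=
    fun s m f => (key s m f).choose_spec
  -- the functional
  let ψ : S → M → Module.Dual R (Module.Dual R M) := fun s m =>
    { toFun := fun f => val s m f
      map_add' := fun f g => by
        apply hinj
        rw [map_add, hval, hval, hval]
        simp only [LinearMap.add_apply, map_add]
        ring
      map_smul' := fun r f => by
        apply hinj
        simp only [RingHom.id_apply, smul_eq_mul, map_mul, hval,
          LinearMap.smul_apply]
        ring }
  -- the action
  let sm : S → M → M := fun s m => (Module.evalEquiv R M).symm (ψ s m)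
  have hstar : ∀ (s : S) (m : M) (f : M →ₗ[R] R),
      algebraMap R (FractionRing R) (f (sm s m))
        = (s : FractionRing R) * algebraMap R (FractionRing R) (f m) := by
    intro s m f
    have h2 : f (sm s m) = ψ s m f := by
      have h1 : Module.Dual.eval R M (sm s m) = ψ s m := by
        rw [← Module.evalEquiv_toLinearMap]
        exact (Module.evalEquiv R M).apply_symm_apply (ψ s m)
      calc f (sm s m) = Module.Dual.eval R M (sm s m) f := rfl
      _ = ψ s m f := by rw [h1]
    rw [h2]
    exact hval s m f
  have hext : ∀ x y : M, (∀ f : M →ₗ[R] R, f x = f y) → x = y := by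
    intro x y h
    apply (Module.evalEquiv R M).injective
    apply LinearMap.ext
    intro f
    simpa [Module.evalEquiv_apply] using h f
  letI instM : Module S M :=
    { smul := sm
      one_smul := fun m => by
        apply hext; intro f; apply hinj
        show algebraMap R (FractionRing R) (f (sm 1 m)) = _
        rw [hstar]; simp
      mul_smul := fun s t m => by
        apply hext; intro f; apply hinj
        show algebraMap R (FractionRing R) (f (sm (s * t) m))
          = algebraMap R (FractionRing R) (f (sm s (sm t m)))
        rw [hstar, hstar, hstar]
        push_cast; ring
      smul_zero := fun s => by
        apply hext; intro f; apply hinj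
        show algebraMap R (FractionRing R) (f (sm s 0)) = _
        rw [hstar]; simp
      smul_add := fun s m n => by
        apply hext; intro f; apply hinj
        show algebraMap R (FractionRing R) (f (sm s (m + n)))
          = algebraMap R (FractionRing R) (f (sm s m + sm s n))
        calc algebraMap R (FractionRing R) (f (sm s (m + n)))
            = (s : FractionRing R) * algebraMap R (FractionRing R) (f (m + n)) := hstar s _ f
        _ = algebraMap R (FractionRing R) (f (sm s m))
            + algebraMap R (FractionRing R) (f (sm s n)) := by
            rw [hstar, hstar, map_add, map_add]; ring
        _ = algebraMap R (FractionRing R) (f (sm s m) + f (sm s n)) := (map_add _ _ _).symm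
        _ = algebraMap R (FractionRing R) (f (sm s m + sm s n)) := by rw [← map_add f]
      add_smul := fun s t m => by
        apply hext; intro f; apply hinj
        show algebraMap R (FractionRing R) (f (sm (s + t) m))
          = algebraMap R (FractionRing R) (f (sm s m + sm t m))
        calc algebraMap R (FractionRing R) (f (sm (s + t) m))
            = ((s + t : S) : FractionRing R) * algebraMap R (FractionRing R) (f m) :=
              hstar _ m f
        _ = algebraMap R (FractionRing R) (f (sm s m))
            + algebraMap R (FractionRing R) (f (sm t m)) := by
            rw [hstar, hstar]; push_cast; ring
        _ = algebraMap R (FractionRing R) (f (sm s m) + f (sm t m)) := (map_add _ _ _).symm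
        _ = algebraMap R (FractionRing R) (f (sm s m + sm t m)) := by rw [← map_add f]
      zero_smul := fun m => by
        apply hext; intro f; apply hinj
        show algebraMap R (FractionRing R) (f (sm 0 m)) = _
        rw [hstar]; simp }
  refine ⟨instM, fun r m => ?_⟩
  apply hext; intro f; apply hinj
  show algebraMap R (FractionRing R) (f (sm (algebraMap R S r) m))
    = algebraMap R (FractionRing R) (f (r • m))
  rw [hstar, f.map_smul, smul_eq_mul, map_mul]
  congr 1

end Aux

/-- Faber; Dao–Maitra–Sridhar. Let `R` be a Noetherian domain, `S` a ring
with `R ⊆ S ⊆ Frac R` which is a finitely generated `R`-module, and `M` a finitely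
generated `R`-module. (i) If the module structure of `M` extends to `S`, then
`tr(M) ⊆ co(R,S)`. (ii) If `M` is reflexive and `tr(M) ⊆ co(R,S)`, then the module
structure of `M` extends to `S`. -/
theorem stmt6 (R : Type*) [CommRing R] [IsDomain R] [IsNoetherianRing R]
    (S : Subalgebra R (FractionRing R)) (hfin : Module.Finite R S)
    (M : Type*) [AddCommGroup M] [Module R M] [Module.Finite R M] :
    (ExtendsToModule R S M → traceIdeal R M ≤ conductorTo R S)
    ∧ (Module.IsReflexive R M → traceIdeal R M ≤ conductorTo R S →
        ExtendsToModule R S M) := by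
  exact ⟨aux_fwd R S M, aux_bwd R S M⟩
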